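/- The number of dispersed Dyck paths of length n (paths with steps -1, +1 away from altitude 0, plus horizontal steps allowed only at altitude 0, starting and ending at altitude 0, never negative) equals binom(n, ⌊n/2⌋). -/

import Mathlib

def DDP (n : ℕ) (s : ℤ) : Set (List ℤ) :=
  {l : List ℤ | l.length = n ∧
      (∀ (i : ℕ) (h : i < l.length),
        l.get ⟨i, h⟩ = 1 ∨ l.get ⟨i, h⟩ = -1 ∨
          (l.get ⟨i, h⟩ = 0 ∧ (l.take i).sum = 0)) ∧
      (∀ k : ℕ, 0 ≤ (l.take k).sum) ∧ l.sum = s}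

lemma DDP_neg {n : ℕ} {s : ℤ} (hs : s < 0) : DDP n s = ∅ := by
  ext l
  simp only [DDP, Set.mem_setOf_eq, Set.mem_empty_iff_false, iff_false]
  rintro ⟨hlen, -, hpre, hsum⟩
  have := hpre l.length
  rw [List.take_of_length_le le_rfl, hsum] at this
  omega

lemma DDP_zero (s : ℤ) : DDP 0 s = if s = 0 then {[]} else ∅ := by
  ext l
  simp only [DDP, Set.mem_setOf_eq, List.length_eq_zero_iff]
  constructor
  · rintro ⟨rfl, -, -, hsum⟩
    simp only [List.sum_nil] at hsum
    simp [← hsum]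
  · intro hl
    split_ifs at hl with h
    · simp only [Set.mem_singleton_iff] at hl
      subst hl
      refine ⟨rfl, by simp, by simp, by simp [h]⟩
    · simp at hl

lemma mem_DDP_append {n : ℕ} {s : ℤ} (l : List ℤ) (a : ℤ) :
    (l ++ [a]) ∈ DDP (n + 1) s ↔
      l ∈ DDP n (s - a) ∧ 0 ≤ s ∧ (a = 1 ∨ a = -1 ∨ (a = 0 ∧ s = 0)) := by
  constructor
  · rintro ⟨hlen, hstep, hpre, hsum⟩
    simp only [List.length_append, List.length_singleton] at hlen
    have hlen' : l.length = n := by omega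
    have hsum' : l.sum = s - a := by
      rw [List.sum_append] at hsum; simp at hsum; omega
    have hpre' : ∀ k, 0 ≤ (l.take k).sum := by
      intro k
      rcases le_or_gt k l.length with hk | hk
      · have := hpre k
        rwa [List.take_append_of_le_length hk] at this
      · rw [List.take_of_length_le (by omega)]
        have := hpre l.length
        rwa [List.take_append_of_le_length le_rfl, List.take_of_length_le le_rfl] at this
    have hs0 : 0 ≤ s := by
      have := hpre (n+1)
      rwa [List.take_of_length_le (by simp [hlen']), hsum] at this
    have hlast := hstep n (by simp [hlen'])
    have hget : (l ++ [a]).get ⟨n, by simp [hlen']⟩ = a := by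
      simp [List.get_eq_getElem, ← hlen', List.getElem_concat_length]
    have htk : ((l ++ [a]).take n).sum = s - a := by
      rw [List.take_append_of_le_length (by omega), List.take_of_length_le (by omega), hsum']
    rw [hget, htk] at hlast
    refine ⟨⟨hlen', ?_, hpre', hsum'⟩, hs0, ?_⟩
    · intro i hi
      have hi' : i < (l ++ [a]).length := by simp; omega
      have := hstep i hi'
      have hg : (l ++ [a]).get ⟨i, hi'⟩ = l.get ⟨i, hi⟩ := by
        simp [List.get_eq_getElem, List.getElem_append_left hi]
      have ht : ((l ++ [a]).take i).sum = (l.take i).sum := by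
        rw [List.take_append_of_le_length (le_of_lt hi)]
      rw [hg, ht] at this
      exact this
    · rcases hlast with h | h | h
      · exact Or.inl h
      · exact Or.inr (Or.inl h)
      · exact Or.inr (Or.inr ⟨h.1, by omega⟩)
  · rintro ⟨⟨hlen, hstep, hpre, hsum⟩, hs0, ha⟩
    refine ⟨by simp [hlen], ?_, ?_, by simp [hsum]⟩
    · intro i hi
      simp only [List.length_append, List.length_singleton] at hi
      rcases lt_or_ge i l.length with hil | hil
      · have hg : (l ++ [a]).get ⟨i, by simp; omega⟩ = l.get ⟨i, hil⟩ := by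
          simp [List.get_eq_getElem, List.getElem_append_left hil]
        have ht : ((l ++ [a]).take i).sum = (l.take i).sum := by
          rw [List.take_append_of_le_length (le_of_lt hil)]
        rw [hg, ht]
        exact hstep i hil
      · have hieq : i = l.length := by omega
        subst hieq
        have hg : (l ++ [a]).get ⟨l.length, by simp⟩ = a := by
          simp [List.get_eq_getElem, List.getElem_concat_length]
        have ht : ((l ++ [a]).take l.length).sum = s - a := by
          rw [List.take_append_of_le_length le_rfl, List.take_of_length_le le_rfl, hsum]
        rw [hg, ht]
        rcases ha with h | h | h
        · exact Or.inl h
        · exact Or.inr (Or.inl h)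
        · exact Or.inr (Or.inr ⟨h.1, by omega⟩)
    · intro k
      rcases le_or_gt k l.length with hk | hk
      · rw [List.take_append_of_le_length hk]; exact hpre k
      · rw [List.take_of_length_le (by simp; omega), List.sum_append]
        simp [hsum]; omega

lemma DDP_succ (n : ℕ) (s : ℤ) (hs : 0 ≤ s) :
    DDP (n + 1) s =
      (fun l => l ++ [(1:ℤ)]) '' DDP n (s - 1) ∪
      (fun l => l ++ [(-1:ℤ)]) '' DDP n (s + 1) ∪
      (if s = 0 then (fun l => l ++ [(0:ℤ)]) '' DDP n 0 else ∅) := by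
  ext l
  constructor
  · intro hl
    have hne : l ≠ [] := by
      intro h; subst h
      exact absurd hl.1 (by simp)
    obtain ⟨l', a, rfl⟩ : ∃ l' a, l = l' ++ [a] := by
      clear hl
      induction l using List.reverseRecOn with
      | nil => simp at hne
      | append_singleton l a _ => exact ⟨l, a, rfl⟩
    rw [mem_DDP_append] at hl
    obtain ⟨hmem, hs0, ha⟩ := hl
    rcases ha with rfl | rfl | ⟨rfl, rfl⟩
    · exact Or.inl (Or.inl ⟨l', hmem, rfl⟩)
    · refine Or.inl (Or.inr ⟨l', ?_, rfl⟩)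
      have he : s + 1 = s - (-1) := by ring
      rw [he]; exact hmem
    · refine Or.inr ?_
      rw [if_pos rfl]
      exact ⟨l', by simpa using hmem, rfl⟩
  · intro hl
    rcases hl with (⟨l', hm, rfl⟩ | ⟨l', hm, rfl⟩) | hl
    · rw [mem_DDP_append]
      exact ⟨hm, hs, Or.inl rfl⟩
    · rw [mem_DDP_append]
      have he : s - (-1) = s + 1 := by ring
      exact ⟨he ▸ hm, hs, Or.inr (Or.inl rfl)⟩
    · split_ifs at hl with h
      · obtain ⟨l', hm, rfl⟩ := hl
        rw [mem_DDP_append]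
        exact ⟨by simpa [h] using hm, hs, Or.inr (Or.inr ⟨rfl, h⟩)⟩
      · simp at hl

lemma DDP_finite (n : ℕ) : ∀ s : ℤ, (DDP n s).Finite := by
  induction n with
  | zero =>
    intro s
    rw [DDP_zero]
    split_ifs <;> simp
  | succ n ih =>
    intro s
    rcases lt_or_ge s 0 with hs | hs
    · rw [DDP_neg hs]; exact Set.finite_empty
    · rw [DDP_succ n s hs]
      refine (((ih (s-1)).image _).union ((ih (s+1)).image _)).union ?_
      split_ifs
      · exact (ih 0).image _
      · exact Set.finite_empty

lemma append_inj' {a : ℤ} : Function.Injective (fun l : List ℤ => l ++ [a]) := by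
  intro x y h
  simpa using (List.append_inj' h rfl).1

lemma last_ne {a b : ℤ} (hab : a ≠ b) (S T : Set (List ℤ)) :
    Disjoint ((fun l => l ++ [a]) '' S) ((fun l => l ++ [b]) '' T) := by
  rw [Set.disjoint_left]
  rintro x ⟨l, -, rfl⟩ ⟨m, -, hm⟩
  have := (List.append_inj' hm rfl).2
  simp only [List.cons.injEq, and_true] at this
  exact hab this.symm

lemma ncard_DDP_succ (n : ℕ) (s : ℤ) (hs : 0 ≤ s) :
    (DDP (n+1) s).ncard =
      (DDP n (s-1)).ncard + (DDP n (s+1)).ncard + (if s = 0 then (DDP n 0).ncard else 0) := by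
  rw [DDP_succ n s hs]
  have f1 := (DDP_finite n (s-1)).image (fun l => l ++ [(1:ℤ)])
  have f2 := (DDP_finite n (s+1)).image (fun l => l ++ [(-1:ℤ)])
  have f3 : (if s = 0 then (fun l => l ++ [(0:ℤ)]) '' DDP n 0 else ∅).Finite := by
    split_ifs
    · exact (DDP_finite n 0).image _
    · exact Set.finite_empty
  have d12 : Disjoint ((fun l => l ++ [(1:ℤ)]) '' DDP n (s-1))
      ((fun l => l ++ [(-1:ℤ)]) '' DDP n (s+1)) := last_ne (by norm_num) _ _
  have d3 : Disjoint (((fun l => l ++ [(1:ℤ)]) '' DDP n (s-1)) ∪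
      ((fun l => l ++ [(-1:ℤ)]) '' DDP n (s+1)))
      (if s = 0 then (fun l => l ++ [(0:ℤ)]) '' DDP n 0 else ∅) := by
    split_ifs
    · exact Set.disjoint_union_left.mpr ⟨last_ne (by norm_num) _ _, last_ne (by norm_num) _ _⟩
    · exact Set.disjoint_empty _
  rw [Set.ncard_union_eq d3 (f1.union f2) f3, Set.ncard_union_eq d12 f1 f2,
    Set.ncard_image_of_injective _ append_inj', Set.ncard_image_of_injective _ append_inj']
  congr 1
  split_ifs
  · rw [Set.ncard_image_of_injective _ append_inj']
  · simp

lemma pascal_aux (n m : ℕ) :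
    Nat.choose (n+1) (m/2) = Nat.choose n (m/2) + if 2 ≤ m then Nat.choose n ((m-2)/2) else 0 := by
  rcases lt_or_ge m 2 with hm | hm
  · interval_cases m <;> simp
  · rw [if_pos hm]
    have h1 : m / 2 = (m/2 - 1) + 1 := by omega
    have h2 : (m-2)/2 = m/2 - 1 := by omega
    rw [h1, h2, Nat.choose_succ_succ]
    simp only [Nat.succ_eq_add_one]
    omega

lemma pascal_zero (n : ℕ) :
    Nat.choose (n+1) ((n+1)/2) =
      (if 1 ≤ n then Nat.choose n ((n-1)/2) else 0) + Nat.choose n (n/2) := by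
  rcases Nat.eq_zero_or_pos n with rfl | hn
  · simp
  rw [if_pos (by omega : 1 ≤ n)]
  rcases Nat.even_or_odd n with ⟨k, hk⟩ | ⟨k, hk⟩
  · subst hk
    have hk1 : k ≥ 1 := by omega
    have h1 : (k + k + 1)/2 = k := by omega
    have h2 : (k + k - 1)/2 = k - 1 := by omega
    have h3 : (k + k)/2 = k := by omega
    rw [h1, h2, h3]
    obtain ⟨j, rfl⟩ : ∃ j, k = j + 1 := ⟨k - 1, by omega⟩
    have hgoal : (j + 1 + (j + 1) + 1).choose (j + 1) =
        (j + 1 + (j + 1)).choose j + (j + 1 + (j + 1)).choose (j + 1) :=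
      Nat.choose_succ_succ _ _
    have hj : j + 1 - 1 = j := by omega
    rw [hj]
    omega
  · subst hk
    have h1 : (2*k+1+1)/2 = k+1 := by omega
    have h2 : (2*k+1-1)/2 = k := by omega
    have h3 : (2*k+1)/2 = k := by omega
    rw [h1, h2, h3, Nat.choose_succ_succ]
    simp only [Nat.succ_eq_add_one]
    have hsymm : Nat.choose (2*k+1) (k+1) = Nat.choose (2*k+1) k := by
      rw [← Nat.choose_symm (by omega)]
      congr 1
      omega
    omega

lemma card_DDP (n : ℕ) : ∀ s : ℤ,
    (DDP n s).ncard = if 0 ≤ s ∧ s ≤ n then Nat.choose n ((n - s.toNat)/2) else 0 := by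
  induction n with
  | zero =>
    intro s
    rw [DDP_zero]
    by_cases h : s = 0
    · subst h
      rw [if_pos rfl, if_pos ⟨le_rfl, by simp⟩]
      simp
    · rw [if_neg h, if_neg (by simp; omega)]
      simp
  | succ n ih =>
    intro s
    rcases lt_or_ge s 0 with hs | hs
    · rw [DDP_neg hs, Set.ncard_empty, if_neg (by omega)]
    rcases hs.eq_or_lt with heq | hpos
    · subst heq
      have e1 : (DDP n (-1)).ncard = 0 := by rw [ih, if_neg (by omega)]
      have e2 : (DDP n 1).ncard = if 1 ≤ n then Nat.choose n ((n-1)/2) else 0 := by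
        rw [ih]
        by_cases h : 1 ≤ n
        · rw [if_pos ⟨by norm_num, by exact_mod_cast h⟩, if_pos h]
          norm_num
        · rw [if_neg (by omega), if_neg h]
      have e3 : (DDP n 0).ncard = Nat.choose n (n/2) := by
        rw [ih, if_pos ⟨le_rfl, by positivity⟩]
        norm_num
      rw [ncard_DDP_succ n 0 le_rfl, show (0:ℤ) - 1 = -1 by norm_num,
        show (0:ℤ) + 1 = 1 by norm_num, e1, e2, e3, if_pos rfl,
        if_pos (show (0:ℤ) ≤ 0 ∧ (0:ℤ) ≤ ((n + 1 : ℕ) : ℤ) by omega)]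
      simp only [Int.toNat_zero, Nat.sub_zero]
      rw [pascal_zero]
      omega
    · obtain ⟨t, rfl⟩ : ∃ t : ℕ, s = t := ⟨s.toNat, (Int.toNat_of_nonneg hs).symm⟩
      obtain ⟨t', rfl⟩ : ∃ t', t = t' + 1 := ⟨t - 1, by omega⟩
      have a1 : ((t' + 1 : ℕ) : ℤ) - 1 = ((t' : ℕ) : ℤ) := by push_cast; ring
      have a2 : ((t' + 1 : ℕ) : ℤ) + 1 = ((t' + 2 : ℕ) : ℤ) := by push_cast; ring
      rw [ncard_DDP_succ _ _ (by positivity), if_neg (by omega), a1, a2, ih, ih]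
      simp only [Int.toNat_natCast]
      by_cases hb : t' ≤ n
      · have c1 : (0:ℤ) ≤ ((t' : ℕ) : ℤ) ∧ ((t' : ℕ) : ℤ) ≤ ((n : ℕ) : ℤ) := by omega
        have c3 : (0:ℤ) ≤ ((t' + 1 : ℕ) : ℤ) ∧ ((t' + 1 : ℕ) : ℤ) ≤ ((n + 1 : ℕ) : ℤ) := by
          omega
        rw [if_pos c1, if_pos c3]
        have hm : n + 1 - (t' + 1) = n - t' := by omega
        rw [hm]
        by_cases hc : t' + 2 ≤ n
        · have c2 : (0:ℤ) ≤ ((t' + 2 : ℕ) : ℤ) ∧ ((t' + 2 : ℕ) : ℤ) ≤ ((n : ℕ) : ℤ) := by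
            omega
          rw [if_pos c2]
          have h2 : n - (t' + 2) = n - t' - 2 := by omega
          rw [h2, pascal_aux n (n - t'), if_pos (show 2 ≤ n - t' by omega)]
          omega
        · have c2 : ¬((0:ℤ) ≤ ((t' + 2 : ℕ) : ℤ) ∧ ((t' + 2 : ℕ) : ℤ) ≤ ((n : ℕ) : ℤ)) := by
            omega
          rw [if_neg c2, pascal_aux n (n - t'), if_neg (show ¬ 2 ≤ n - t' by omega)]
      · have c1 : ¬((0:ℤ) ≤ ((t' : ℕ) : ℤ) ∧ ((t' : ℕ) : ℤ) ≤ ((n : ℕ) : ℤ)) := by omega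
        have c2 : ¬((0:ℤ) ≤ ((t' + 2 : ℕ) : ℤ) ∧ ((t' + 2 : ℕ) : ℤ) ≤ ((n : ℕ) : ℤ)) := by
          omega
        have c3 : ¬((0:ℤ) ≤ ((t' + 1 : ℕ) : ℤ) ∧ ((t' + 1 : ℕ) : ℤ) ≤ ((n + 1 : ℕ) : ℤ)) := by
          omega
        rw [if_neg c1, if_neg c2, if_neg c3]



/-- The number of dispersed Dyck paths of length `n` — lattice paths
of `n` steps starting and ending at altitude `0`, never going below `0`, with steps
`+1` or `-1`, except that a horizontal step (altitude change `0`) may be taken only at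
altitude `0` — equals `binom(n, ⌊n/2⌋)`. -/
theorem card_dispersed_dyck (n : ℕ) :
    ({l : List ℤ | l.length = n ∧
        (∀ (i : ℕ) (h : i < l.length),
          l.get ⟨i, h⟩ = 1 ∨ l.get ⟨i, h⟩ = -1 ∨
            (l.get ⟨i, h⟩ = 0 ∧ (l.take i).sum = 0)) ∧
        (∀ k : ℕ, 0 ≤ (l.take k).sum) ∧ l.sum = 0}).ncard =
      Nat.choose n (n / 2) := by
  have h : ({l : List ℤ | l.length = n ∧
        (∀ (i : ℕ) (h : i < l.length),
          l.get ⟨i, h⟩ = 1 ∨ l.get ⟨i, h⟩ = -1 ∨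
            (l.get ⟨i, h⟩ = 0 ∧ (l.take i).sum = 0)) ∧
        (∀ k : ℕ, 0 ≤ (l.take k).sum) ∧ l.sum = 0}) = DDP n 0 := rfl
  rw [h, card_DDP, if_pos ⟨le_rfl, by positivity⟩]
  norm_num
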